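/- In the Galois setup, assume that for every σ′ ∈ Stab(T) the pullback pair p^*σ′ is a locally finite stability condition on T_L. Then the map p^* : Stab(T) → Stab(T_L) is injective and the map p_* : Stab(T_L)_p → Stab(T) is surjective. -/

import Mathlib

open CategoryTheory Limits Pretriangulated ENNReal

noncomputable section

namespace StabilityPaper

universe v u v₂ u₂ v₃ u₃

/-- The data of a "prestability condition": a central charge, given as a function on
objects (which, when required to be additive on distinguished triangles, is the same
as a group homomorphism `K(T) → ℂ` on the Grothendieck group), and a collection of
sets of objects `P φ` for `φ ∈ ℝ`. -/
structure PreStab (C : Type u) where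
  Z : C → ℂ
  P : ℝ → Set C

section Triangulated

variable {C : Type u} [Category.{v} C] [Preadditive C] [HasZeroObject C] [HasShift C ℤ]
  [∀ n : ℤ, (shiftFunctor C n).Additive] [Pretriangulated C] [HasFiniteBiproducts C]

/-- A Harder–Narasimhan filtration of `E` with respect to the collection of
subcategories `P`: distinguished triangles `E_{i-1} → E_i → A_i` with `E_0 = 0`,
`E_n ≅ E`, `A_i` a nonzero object of `P (φ i)` and strictly decreasing phases `φ`. -/
structure HNFiltration (P : ℝ → Set C) (E : C) where
  n : ℕ
  npos : 0 < n
  Fil : Fin (n + 1) → C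
  A : Fin n → C
  phi : Fin n → ℝ
  fil_zero : IsZero (Fil 0)
  fil_last : Nonempty (Fil (Fin.last n) ≅ E)
  A_mem : ∀ i, A i ∈ P (phi i)
  A_ne : ∀ i, ¬ IsZero (A i)
  phi_anti : StrictAnti phi
  tri : ∀ i : Fin n, ∃ (f : Fil i.castSucc ⟶ Fil i.succ) (g : Fil i.succ ⟶ A i)
    (h : A i ⟶ (Fil i.castSucc)⟦(1 : ℤ)⟧), Triangle.mk f g h ∈ distTriang C

/-- The condition that the subcategories `P φ` are strictly full additive
subcategories. -/
structure IsSlicing (P : ℝ → Set C) : Prop where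
  iso_mem : ∀ (φ : ℝ) (X Y : C), Nonempty (X ≅ Y) → X ∈ P φ → Y ∈ P φ
  zero_mem : ∀ (φ : ℝ) (X : C), IsZero X → X ∈ P φ
  sum_mem : ∀ (φ : ℝ) (X Y : C), X ∈ P φ → Y ∈ P φ → (X ⊞ Y) ∈ P φ

/-- The axioms (SC1)-(SC4) of a stability condition on a triangulated category,
together with the requirements that the `P φ` are strictly full additive subcategories
and that `Z` is additive on distinguished triangles (i.e. descends to a group
homomorphism on the Grothendieck group). -/
structure IsStabCond (σ : PreStab C) : Prop where
  slicing : IsSlicing σ.P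
  zadd : ∀ T ∈ distTriang C, σ.Z T.obj₂ = σ.Z T.obj₁ + σ.Z T.obj₃
  sc1 : ∀ (φ : ℝ) (E : C), E ∈ σ.P φ → ¬ IsZero E →
    ∃ m : ℝ, 0 < m ∧ σ.Z E = (m : ℂ) * Complex.exp ((Real.pi : ℂ) * φ * Complex.I)
  sc2 : ∀ (φ : ℝ) (E : C), (E⟦(1 : ℤ)⟧ ∈ σ.P (φ + 1)) ↔ E ∈ σ.P φ
  sc3 : ∀ (φ₁ φ₂ : ℝ), φ₂ < φ₁ → ∀ E₁ ∈ σ.P φ₁, ∀ E₂ ∈ σ.P φ₂, ∀ f : E₁ ⟶ E₂, f = 0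
  sc4 : ∀ E : C, ¬ IsZero E → Nonempty (HNFiltration σ.P E)

/-- The extension-closed subcategory generated by a set of objects. -/
inductive extClosure (S : Set C) : C → Prop
  | of {X : C} : X ∈ S → extClosure S X
  | zero {X : C} : IsZero X → extClosure S X
  | iso {X Y : C} : (X ≅ Y) → extClosure S X → extClosure S Y
  | ext (T : Triangle C) (hT : T ∈ distTriang C) (h₁ : extClosure S T.obj₁)
      (h₃ : extClosure S T.obj₃) : extClosure S T.obj₂

/-- `A` is a strict subobject of `B` inside the subcategory `𝒜`: there is a
distinguished triangle `A → B → Q` with `Q` a nonzero object of `𝒜`. -/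
def StrictSubIn (𝒜 : Set C) (A B : C) : Prop :=
  A ∈ 𝒜 ∧ B ∈ 𝒜 ∧ ∃ (f : A ⟶ B) (Q : C) (g : B ⟶ Q) (h : Q ⟶ A⟦(1 : ℤ)⟧),
    Q ∈ 𝒜 ∧ ¬ IsZero Q ∧ Triangle.mk f g h ∈ distTriang C

/-- `B` is a strict quotient of `A` inside the subcategory `𝒜`: there is a
distinguished triangle `K → A → B` with `K` a nonzero object of `𝒜`. -/
def StrictQuotIn (𝒜 : Set C) (A B : C) : Prop :=
  A ∈ 𝒜 ∧ B ∈ 𝒜 ∧ ∃ (K : C) (f : K ⟶ A) (g : A ⟶ B) (h : B ⟶ K⟦(1 : ℤ)⟧),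
    K ∈ 𝒜 ∧ ¬ IsZero K ∧ Triangle.mk f g h ∈ distTriang C

/-- A subcategory is of finite length if it is Artinian (no infinite chains of strict
subobjects) and Noetherian (no infinite chains of strict quotients). -/
def FiniteLengthIn (𝒜 : Set C) : Prop :=
  (¬ ∃ c : ℕ → C, ∀ n, StrictSubIn 𝒜 (c (n + 1)) (c n)) ∧
  (¬ ∃ c : ℕ → C, ∀ n, StrictQuotIn 𝒜 (c n) (c (n + 1)))

/-- Local finiteness of a prestability condition. -/
def LocallyFinite (σ : PreStab C) : Prop :=
  ∃ ε : ℝ, 0 < ε ∧ ∀ φ : ℝ,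
    FiniteLengthIn (setOf (extClosure (⋃ ψ ∈ Set.Ioo (φ - ε) (φ + ε), σ.P ψ)))

/-- A locally finite stability condition. -/
def IsStabilityCondition (σ : PreStab C) : Prop :=
  IsStabCond σ ∧ LocallyFinite σ

variable (C) in
/-- The set of locally finite stability conditions on `C`. -/
abbrev Stab := {σ : PreStab C // IsStabilityCondition σ}

/-- The largest phase `φ⁺(E)` appearing in a Harder–Narasimhan filtration of `E`
(well defined, by uniqueness of Harder–Narasimhan filtrations, for a stability
condition; here defined as a supremum over all HN filtrations). -/
def phiPlus (σ : PreStab C) (E : C) : ℝ :=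
  sSup {x | ∃ h : HNFiltration σ.P E, x = h.phi ⟨0, h.npos⟩}

/-- The smallest phase `φ⁻(E)` appearing in a Harder–Narasimhan filtration of `E`. -/
def phiMinus (σ : PreStab C) (E : C) : ℝ :=
  sSup {x | ∃ h : HNFiltration σ.P E, x = h.phi ⟨h.n - 1, Nat.sub_lt h.npos one_pos⟩}

/-- The mass `m_σ(E) = ∑ |Z(A_i)|` of an object. -/
def mass (σ : PreStab C) (E : C) : ℝ :=
  sSup {x | ∃ h : HNFiltration σ.P E, x = ∑ i, ‖σ.Z (h.A i)‖}

/-- Bridgeland's generalized metric on the space of stability conditions, with values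
in `[0, ∞]`. -/
def stabDist (σ τ : PreStab C) : ℝ≥0∞ :=
  ⨆ E : {E : C // ¬ IsZero E},
    ENNReal.ofReal (max |phiMinus σ E.1 - phiMinus τ E.1|
      (max |phiPlus σ E.1 - phiPlus τ E.1| |Real.log (mass σ E.1 / mass τ E.1)|))

/-- The topology induced by the generalized metric: the topology generated by
open balls. -/
instance : TopologicalSpace (Stab C) :=
  TopologicalSpace.generateFrom
    {U | ∃ (σ : Stab C) (r : ℝ≥0∞), U = {τ : Stab C | stabDist σ.1 τ.1 < r}}

end Triangulated

section Functoriality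

variable {C : Type u} [Category.{v} C] {D : Type u₂} [Category.{v₂} D]

/-- Given a functor `p : C ⥤ D` and a prestability condition `σ` on `D`, the
"pushforward" prestability condition on `C`: its central charge is `Z ∘ K(p)` and its
slicing is `P' φ = {E | p(E) ∈ P φ}`.  (When `p = p^* : D^b(X) → D^b(X_L)`, this is the
pushforward `p_* σ` of a stability condition on `X_L`; when `p = p_* : D^b(X_L) → D^b(X)`,
this is the pullback `p^* σ` of a stability condition on `X`.) -/
def pushforward (p : C ⥤ D) (σ : PreStab D) : PreStab C where
  Z E := σ.Z (p.obj E)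
  P φ := {E | p.obj E ∈ σ.P φ}

end Functoriality

section GroupAction

variable {C : Type u} [Category.{v} C] {G : Type} [Group G]

/-- The action of a group element `g` on prestability conditions:
`g • (Z, P) = (Z ∘ K(g_*), g^* P)`, where `g_* = (g⁻¹)^*` and `(g^* P)(φ)` is the
strictly full image of `P φ` under `g^*`. -/
def gAct (gst : G → C ⥤ C) (g : G) (σ : PreStab C) : PreStab C where
  Z E := σ.Z ((gst g⁻¹).obj E)
  P φ := {E | ∃ X ∈ σ.P φ, Nonempty ((gst g).obj X ≅ E)}

/-- The cocycle condition for a `G`-linearization `lam` of an object `X`. -/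
def CocycleLin (gst : G → C ⥤ C) (actMul : ∀ g h : G, gst h ⋙ gst g ≅ gst (g * h))
    (X : C) (lam : ∀ g : G, X ≅ (gst g).obj X) : Prop :=
  ∀ g h : G, (lam (g * h)).hom =
    (lam g).hom ≫ (gst g).map ((lam h).hom) ≫ (actMul g h).hom.app X

/-- Compatibility of a morphism with `G`-linearizations of its source and target. -/
def LinHomCompat (gst : G → C ⥤ C) {X Y : C}
    (lamX : ∀ g : G, X ≅ (gst g).obj X) (lamY : ∀ g : G, Y ≅ (gst g).obj Y)
    (f : X ⟶ Y) : Prop :=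
  ∀ g : G, f ≫ (lamY g).hom = (lamX g).hom ≫ (gst g).map f

/-- A function on objects which is additive on distinguished triangles; this is the
same as a group homomorphism on the Grothendieck group. -/
def AdditiveOnTriangles {C : Type u₂} [Category.{v₂} C] [Preadditive C] [HasZeroObject C]
    [HasShift C ℤ] [∀ n : ℤ, (shiftFunctor C n).Additive] [Pretriangulated C]
    (U : C → ℂ) : Prop :=
  ∀ T ∈ distTriang C, U T.obj₂ = U T.obj₁ + U T.obj₃

/-- Bridgeland's generalized norm `‖U‖_σ` on central charges, with values in `[0,∞]`:
the supremum over nonzero `σ`-semistable objects `E` of `|U(E)|/|Z(E)|`. -/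
noncomputable def stabNorm (σ : PreStab C) (U : C → ℂ) : ℝ≥0∞ :=
  ⨆ E : {E : C // ¬ IsZero E ∧ ∃ φ : ℝ, E ∈ σ.P φ},
    ENNReal.ofReal (‖U E.1‖ / ‖σ.Z E.1‖)

end GroupAction

section Descent

variable {C₁ : Type u} [Category.{v} C₁] {C₂ : Type u₂} [Category.{v₂} C₂]
  {G : Type} [Group G]

/-- The Galois descent hypothesis: the natural functor from `T` to the category of
`G`-linearized objects of `T_L`, sending `E` to `p^* E` with its canonical
linearization, is an equivalence of categories.  This is expressed by saying that it
is fully faithful (morphisms compatible with the linearizations descend uniquely) and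
essentially surjective (every `G`-linearized object is isomorphic, compatibly with the
linearizations, to some `p^* E` with its canonical linearization). -/
def GaloisDescent (pstar : C₁ ⥤ C₂) (gst : G → C₂ ⥤ C₂)
    (actMul : ∀ g h : G, gst h ⋙ gst g ≅ gst (g * h))
    (pIso : ∀ g : G, pstar ≅ pstar ⋙ gst g) : Prop :=
  (∀ (E F : C₁) (f' : pstar.obj E ⟶ pstar.obj F),
      LinHomCompat gst (fun g => (pIso g).app E) (fun g => (pIso g).app F) f' →
      ∃! f : E ⟶ F, pstar.map f = f') ∧
  (∀ (X : C₂) (lam : ∀ g : G, X ≅ (gst g).obj X), CocycleLin gst actMul X lam →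
      ∃ (E : C₁) (u : pstar.obj E ≅ X),
        LinHomCompat gst (fun g => (pIso g).app E) lam u.hom)

end Descent


section AuxLemmas

open ZeroObject

variable {C : Type u} [Category.{v} C] [Preadditive C] [HasZeroObject C] [HasShift C ℤ]
  [∀ n : ℤ, (shiftFunctor C n).Additive] [Pretriangulated C] [HasFiniteBiproducts C]

/-- The decomposition of a biproduct over `Fin (n + 1)`. -/
noncomputable def biprodFinSucc (n : ℕ) (X : C) :
    (⨁ fun _ : Fin (n+1) => X) ≅ X ⊞ ⨁ (fun _ : Fin n => X) where
  hom := biprod.lift (biproduct.π (fun _ : Fin (n+1) => X) 0)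
    (biproduct.lift fun i : Fin n => biproduct.π (fun _ : Fin (n+1) => X) i.succ)
  inv := biprod.desc (biproduct.ι (fun _ : Fin (n+1) => X) 0)
    (biproduct.desc fun i : Fin n => biproduct.ι (fun _ : Fin (n+1) => X) i.succ)
  hom_inv_id := by
    rw [biprod.lift_desc, biproduct.lift_desc, ← biproduct.total, Fin.sum_univ_succ]
  inv_hom_id := by
    ext i <;>
      simp [biproduct.ι_π_ne _ (Fin.succ_ne_zero _).symm, biproduct.ι_π, Fin.succ_inj,
        Fin.succ_ne_zero]

variable (Z : C → ℂ) (hZ : ∀ T ∈ distTriang C, Z T.obj₂ = Z T.obj₁ + Z T.obj₃)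

include hZ in
/-- A function additive on distinguished triangles is invariant under isomorphisms. -/
lemma Z_iso {X Y : C} (e : X ≅ Y) : Z X = Z Y := by
  have h0 : Z (0 : C) = 0 := by
    have := hZ _ (contractible_distinguished (0 : C))
    simpa using this
  have ht : Triangle.mk e.hom (0 : Y ⟶ (0:C)) 0 ∈ distTriang C := by
    refine isomorphic_distinguished _ (contractible_distinguished X) _ ?_
    exact Triangle.isoMk _ _ (Iso.refl X) e.symm (Iso.refl 0)
      (e.hom_inv_id.trans (Category.comp_id _).symm)
      (Limits.zero_comp.trans Limits.comp_zero.symm) (Limits.zero_comp.trans (Limits.comp_zero (f := (Iso.refl (0 : C)).hom)).symm)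
  have := hZ _ ht
  simpa [h0] using this.symm

include hZ in
/-- A function additive on distinguished triangles vanishes on zero objects. -/
lemma Z_isZero {X : C} (h : IsZero X) : Z X = 0 := by
  rw [Z_iso Z hZ h.isoZero]
  have := hZ _ (contractible_distinguished (0 : C))
  simpa using this

include hZ in
/-- A function additive on distinguished triangles is additive on binary biproducts. -/
lemma Z_biprod (X Y : C) : Z (X ⊞ Y) = Z X + Z Y :=
  hZ _ (binaryBiproductTriangle_distinguished X Y)

include hZ in
lemma Z_fin (n : ℕ) (X : C) : Z (⨁ fun _ : Fin n => X) = n * Z X := by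
  induction n with
  | zero =>
      rw [Z_isZero Z hZ]
      · simp
      · rw [IsZero.iff_id_eq_zero]
        exact biproduct.hom_ext _ _ (fun i => i.elim0)
  | succ n ih =>
      rw [Z_iso Z hZ (biprodFinSucc n X), Z_biprod Z hZ, ih]
      push_cast
      ring

include hZ in
/-- The value of an additive function on a constant finite biproduct. -/
lemma Z_card (ι : Type) [Fintype ι] (X : C) :
    Z (⨁ fun _ : ι => X) = (Fintype.card ι : ℂ) * Z X := by
  rw [Z_iso Z hZ (biproduct.whiskerEquiv (f := fun _ : ι => X)
    (g := fun _ : Fin (Fintype.card ι) => X) (Fintype.equivFin ι) (fun _ => Iso.refl X)),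
    Z_fin Z hZ]

/-- A slicing is closed under constant finite biproducts over `Fin n`. -/
lemma mem_biproduct_fin {σ : PreStab C} (hsl : IsSlicing σ.P) {X : C} {φ : ℝ}
    (hX : X ∈ σ.P φ) (n : ℕ) : (⨁ fun _ : Fin n => X) ∈ σ.P φ := by
  induction n with
  | zero =>
      refine hsl.zero_mem φ _ ?_
      rw [IsZero.iff_id_eq_zero]
      exact biproduct.hom_ext _ _ (fun i => i.elim0)
  | succ n ih =>
      exact hsl.iso_mem φ _ _ ⟨(biprodFinSucc n X).symm⟩ (hsl.sum_mem φ _ _ hX ih)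

/-- A slicing is closed under constant finite biproducts. -/
lemma mem_biproduct {σ : PreStab C} (hsl : IsSlicing σ.P) {X : C} {φ : ℝ}
    (hX : X ∈ σ.P φ) (ι : Type) [Fintype ι] : (⨁ fun _ : ι => X) ∈ σ.P φ :=
  hsl.iso_mem φ _ _ ⟨(biproduct.whiskerEquiv (f := fun _ : ι => X)
    (g := fun _ : Fin (Fintype.card ι) => X) (Fintype.equivFin ι)
    (fun _ => Iso.refl X)).symm⟩ (mem_biproduct_fin hsl hX _)


/-- Shifting a member of the slicing down by one. -/
lemma mem_shift_neg {σ : PreStab C} (hs : IsStabCond σ) {X : C} {φ : ℝ}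
    (hX : X ∈ σ.P φ) : X⟦(-1 : ℤ)⟧ ∈ σ.P (φ - 1) := by
  apply (hs.sc2 (φ - 1) (X⟦(-1 : ℤ)⟧)).mp
  have e : (X⟦(-1 : ℤ)⟧)⟦(1 : ℤ)⟧ ≅ X :=
    (shiftFunctorCompIsoId C (-1 : ℤ) (1 : ℤ) (by omega)).app X
  have : φ - 1 + 1 = φ := by ring
  rw [this]
  exact hs.slicing.iso_mem φ X _ ⟨e.symm⟩ hX

/-- Vanishing of morphisms out of a step of the HN filtration into a low phase. -/
lemma homFilVanish {σ : PreStab C} (hs : IsStabCond σ) {E : C} (h : HNFiltration σ.P E)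
    {X : C} {ψ : ℝ} (hX : X ∈ σ.P ψ) :
    ∀ (k : ℕ) (hk : k ≤ h.n), (∀ i : Fin h.n, (i : ℕ) < k → ψ < h.phi i) →
      ∀ u : h.Fil ⟨k, Nat.lt_succ_of_le hk⟩ ⟶ X, u = 0 := by
  intro k
  induction k with
  | zero =>
      intro hk _ u
      have hz : IsZero (h.Fil ⟨0, Nat.lt_succ_of_le hk⟩) := by
        simpa using h.fil_zero
      exact hz.eq_of_src u 0
  | succ k ih =>
      intro hk hph u
      have hkn : k < h.n := hk
      set i : Fin h.n := ⟨k, hkn⟩ with hi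
      obtain ⟨f, g, m, hT⟩ := h.tri i
      have hfu : f ≫ (u : h.Fil i.succ ⟶ X) = 0 :=
        ih (le_of_lt hkn) (fun j hj => hph j (by omega)) (f ≫ u)
      obtain ⟨w, hw⟩ := Triangle.yoneda_exact₂ _ hT u hfu
      have hw0 : w = 0 := hs.sc3 (h.phi i) ψ (hph i (Nat.lt_succ_self k)) _ (h.A_mem i) _ hX w
      rw [hw, hw0, Limits.comp_zero]; rfl

/-- If `E` is a retract of an object of `σ.P φ`, then `E ∈ σ.P φ`. -/
lemma mem_of_retract {σ : PreStab C} (hs : IsStabCond σ) {E D : C}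
    (hE : ¬ IsZero E) (i : E ⟶ D) (p : D ⟶ E) (hip : i ≫ p = 𝟙 E)
    {φ : ℝ} (hD : D ∈ σ.P φ) : E ∈ σ.P φ := by
  obtain ⟨h⟩ := hs.sc4 E hE
  obtain ⟨e⟩ := h.fil_last
  -- a chain of nonzero maps `A 0 ⟶ Fil k`
  have key : ∀ k : ℕ, 1 ≤ k → ∀ hk : k ≤ h.n,
      ∃ c : h.A ⟨0, h.npos⟩ ⟶ h.Fil ⟨k, Nat.lt_succ_of_le hk⟩, c ≠ 0 := by
    intro k
    induction k with
    | zero => omega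
    | succ k ih =>
      intro _ hk
      rcases Nat.eq_zero_or_pos k with hk0 | hk1
      · subst hk0
        obtain ⟨f, g, m, hT⟩ := h.tri ⟨0, h.npos⟩
        have hzero : IsZero ((Triangle.mk f g m).obj₁) := by
          show IsZero (h.Fil (Fin.castSucc ⟨0, h.npos⟩)); rw [show (Fin.castSucc ⟨0, h.npos⟩ : Fin (h.n+1)) = 0 from Fin.ext (by simp)]; exact h.fil_zero
        have : IsIso g := (Triangle.isZero₁_iff_isIso₂ _ hT).mp hzero
        refine ⟨inv g, fun hc => h.A_ne ⟨0, h.npos⟩ ?_⟩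
        rw [IsZero.iff_id_eq_zero, ← IsIso.inv_hom_id g, hc, Limits.zero_comp]
      · have hkn : k < h.n := by omega
        obtain ⟨c, hc⟩ := ih hk1 (le_of_lt hkn)
        obtain ⟨f, g, m, hT⟩ := h.tri ⟨k, hkn⟩
        refine ⟨c ≫ f, fun hcf => hc ?_⟩
        obtain ⟨w, hw⟩ := Triangle.coyoneda_exact₂ _ (inv_rot_of_distTriang _ hT) c
          (by exact hcf)
        have hw0 : w = 0 := by
          refine hs.sc3 (h.phi ⟨0, h.npos⟩) (h.phi ⟨k, hkn⟩ - 1) ?_ _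
            (h.A_mem ⟨0, h.npos⟩) _ (mem_shift_neg hs (h.A_mem ⟨k, hkn⟩)) w
          have := h.phi_anti.antitone
            (show (⟨0, h.npos⟩ : Fin h.n) ≤ ⟨k, hkn⟩ from by simp)
          linarith
        rw [hw, hw0, Limits.zero_comp]; rfl
  -- upper bound for the first phase
  have hA : h.phi ⟨0, h.npos⟩ ≤ φ := by
    by_contra hlt
    push_neg at hlt
    obtain ⟨c, hc⟩ := key h.n h.npos le_rfl
    apply hc
    have h0 : c ≫ e.hom ≫ i = 0 :=
      hs.sc3 (h.phi ⟨0, h.npos⟩) φ hlt _ (h.A_mem ⟨0, h.npos⟩) _ hD _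
    have hcc : ((c ≫ e.hom ≫ i) ≫ p) ≫ e.inv = c := by
      simp [reassoc_of% hip]
    rw [← hcc, h0, Limits.zero_comp, Limits.zero_comp]
  -- lower bound for the last phase
  have hnlt : h.n - 1 < h.n := Nat.sub_lt h.npos one_pos
  set j : Fin h.n := ⟨h.n - 1, hnlt⟩ with hj
  obtain ⟨f, g, m, hT⟩ := h.tri j
  have hjsucc : j.succ = Fin.last h.n := by
    rw [hj]; ext; simp; omega
  have hg : g ≠ 0 := by
    intro hg0
    obtain ⟨v, hv⟩ := Triangle.yoneda_exact₂ _ (rot_of_distTriang _ hT)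
      (𝟙 (h.A j)) (by exact (Category.comp_id _).trans hg0)
    have hv' : (shiftFunctorCompIsoId C (1 : ℤ) (-1 : ℤ) (by omega)).inv.app
        (h.Fil j.castSucc) ≫ (shiftFunctor C (-1 : ℤ)).map v = 0 := by
      refine homFilVanish hs h (mem_shift_neg hs (h.A_mem j)) (h.n - 1)
        (le_of_lt hnlt) (fun i' hi' => ?_) _
      have : h.phi j ≤ h.phi i' := by
        refine h.phi_anti.antitone ?_
        rw [Fin.le_def, hj]
        simpa using by omega
      linarith
    have hv0 : (shiftFunctor C (-1 : ℤ)).map v = 0 := by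
      refine (cancel_epi ((shiftFunctorCompIsoId C (1 : ℤ) (-1 : ℤ) (by omega)).inv.app
        (h.Fil j.castSucc))).mp ?_
      exact hv'.trans Limits.comp_zero.symm
    have hv00 : v = 0 :=
      (shiftFunctor C (-1 : ℤ)).map_injective (by rw [hv0, Functor.map_zero])
    rw [hv00, Limits.comp_zero] at hv
    exact h.A_ne j ((IsZero.iff_id_eq_zero _).mpr hv)
  have hB : φ ≤ h.phi j := by
    by_contra hlt
    push_neg at hlt
    apply hg
    have h0 : (p ≫ e.inv ≫ eqToHom (congrArg h.Fil hjsucc.symm)) ≫ g = 0 :=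
      hs.sc3 φ (h.phi j) hlt _ hD _ (h.A_mem j) _
    have hgg : (eqToHom (congrArg h.Fil hjsucc) ≫ e.hom ≫ i) ≫
        ((p ≫ e.inv ≫ eqToHom (congrArg h.Fil hjsucc.symm)) ≫ g) = g := by
      simp [reassoc_of% hip]
    rw [h0, Limits.comp_zero] at hgg
    exact hgg.symm
  -- conclude
  have hn1 : h.n = 1 := by
    by_contra hn
    have := h.phi_anti (show (⟨0, h.npos⟩ : Fin h.n) < j from by
      rw [hj]; exact Fin.mk_lt_mk.mpr (by omega))
    linarith
  have hjz : j = ⟨0, h.npos⟩ := by rw [hj]; ext; simp [hn1]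
  have hφ : h.phi j = φ := by
    refine le_antisymm ?_ hB
    rw [hjz]; exact hA
  have hzero : IsZero ((Triangle.mk f g m).obj₁) := by
    have hcs : j.castSucc = 0 := by rw [hj]; ext; simp [hn1]
    show IsZero (h.Fil j.castSucc)
    rw [hcs]; exact h.fil_zero
  have : IsIso g := (Triangle.isZero₁_iff_isIso₂ _ hT).mp hzero
  refine hs.slicing.iso_mem φ (h.A j) E
    ⟨(asIso g).symm.trans ((eqToIso (congrArg h.Fil hjsucc)).trans e)⟩ ?_
  rw [← hφ]
  exact h.A_mem j

end AuxLemmas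


/-- In the Galois setup, if the pullback pair `p^* σ'` is a locally
finite stability condition on `T_L` for every `σ' ∈ Stab(T)`, then
`p^* : Stab(T) → Stab(T_L)` is injective and `p_* : Stab(T_L)_p → Stab(T)` is
surjective. -/
theorem statement_4
    {C₁ : Type u} [Category.{v} C₁] [Preadditive C₁] [HasZeroObject C₁] [HasShift C₁ ℤ]
    [∀ n : ℤ, (shiftFunctor C₁ n).Additive] [Pretriangulated C₁] [HasFiniteBiproducts C₁]
    {C₂ : Type u₂} [Category.{v₂} C₂] [Preadditive C₂] [HasZeroObject C₂] [HasShift C₂ ℤ]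
    [∀ n : ℤ, (shiftFunctor C₂ n).Additive] [Pretriangulated C₂] [HasFiniteBiproducts C₂]
    {G : Type} [Group G] [Fintype G]
    (pstar : C₁ ⥤ C₂) [pstar.CommShift ℤ] [pstar.IsTriangulated]
    (plow : C₂ ⥤ C₁) [plow.CommShift ℤ] [plow.IsTriangulated]
    (gst : G → C₂ ⥤ C₂) [∀ g : G, (gst g).CommShift ℤ] [∀ g : G, (gst g).IsTriangulated]
    [∀ g : G, (gst g).IsEquivalence]
    (actOne : gst 1 ≅ 𝟭 C₂) (actMul : ∀ g h : G, gst h ⋙ gst g ≅ gst (g * h))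
    (pIso : ∀ g : G, pstar ≅ pstar ⋙ gst g)
    (pIsoCocycle : ∀ (g h : G) (E : C₁), (pIso (g * h)).hom.app E =
      (pIso g).hom.app E ≫ (gst g).map ((pIso h).hom.app E) ≫ (actMul g h).hom.app (pstar.obj E))
    (qIso : ∀ g : G, gst g ⋙ plow ≅ plow)
    (ppIso : ∀ E : C₁, plow.obj (pstar.obj E) ≅ ⨁ (fun _ : G => E))
    (ppNat : ∀ {E F : C₁} (f : E ⟶ F),
      plow.map (pstar.map f) ≫ (ppIso F).hom = (ppIso E).hom ≫ biproduct.map (fun _ => f))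
    (qpIso : ∀ X : C₂, pstar.obj (plow.obj X) ≅ ⨁ (fun g : G => (gst g).obj X))
    (qpNat : ∀ {X Y : C₂} (f : X ⟶ Y),
      pstar.map (plow.map f) ≫ (qpIso Y).hom = (qpIso X).hom ≫ biproduct.map (fun g => (gst g).map f))
    (hpb : ∀ σ' : Stab C₁, IsStabilityCondition (pushforward plow σ'.1)) :
    Function.Injective (fun σ' : Stab C₁ => (⟨pushforward plow σ'.1, hpb σ'⟩ : Stab C₂)) ∧
    (∀ σ' : Stab C₁, ∃ σ : Stab C₂, IsStabilityCondition (pushforward pstar σ.1) ∧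
      pushforward pstar σ.1 = σ'.1) := by
  classical
  have hnG : Nonempty G := ⟨1⟩
  have hcardC : (Fintype.card G : ℂ) ≠ 0 := Nat.cast_ne_zero.mpr Fintype.card_ne_zero
  have hcpos : (0 : ℝ) < ((Fintype.card G : ℝ))⁻¹ := by
    have : (0 : ℝ) < (Fintype.card G : ℝ) := by exact_mod_cast Fintype.card_pos
    positivity
  -- extensionality for prestability conditions
  have hext : ∀ a b : PreStab C₁, a.Z = b.Z → a.P = b.P → a = b := by
    rintro ⟨z, q⟩ ⟨z', q'⟩ hz hq
    cases hz; cases hq; rfl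
  -- a one-sided comparison principle
  have hmem : ∀ σa σb : Stab C₁, (∀ (φ : ℝ) (F : C₂),
      plow.obj F ∈ σa.1.P φ → plow.obj F ∈ σb.1.P φ) →
      ∀ (φ : ℝ) (E : C₁), E ∈ σa.1.P φ → E ∈ σb.1.P φ := by
    intro σa σb hab φ E hE
    by_cases hz : IsZero E
    · exact σb.2.1.slicing.zero_mem φ E hz
    · have h1 : (⨁ fun _ : G => E) ∈ σa.1.P φ := mem_biproduct σa.2.1.slicing hE G
      have h2 : plow.obj (pstar.obj E) ∈ σa.1.P φ :=
        σa.2.1.slicing.iso_mem φ _ _ ⟨(ppIso E).symm⟩ h1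
      have h3 : plow.obj (pstar.obj E) ∈ σb.1.P φ := hab φ _ h2
      have h4 : (⨁ fun _ : G => E) ∈ σb.1.P φ :=
        σb.2.1.slicing.iso_mem φ _ _ ⟨ppIso E⟩ h3
      exact mem_of_retract σb.2.1 hz (biproduct.ι (fun _ : G => E) 1)
        (biproduct.π (fun _ : G => E) 1) (by simp) h4
  constructor
  · -- injectivity of the pullback
    intro σ₁ σ₂ hσ
    have h12 : pushforward plow σ₁.1 = pushforward plow σ₂.1 := congrArg Subtype.val hσ
    have hZeq : ∀ F : C₂, σ₁.1.Z (plow.obj F) = σ₂.1.Z (plow.obj F) := fun F =>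
      congrFun (congrArg PreStab.Z h12) F
    have hPeq : ∀ (φ : ℝ) (F : C₂), plow.obj F ∈ σ₁.1.P φ ↔ plow.obj F ∈ σ₂.1.P φ := by
      intro φ F
      exact Set.ext_iff.mp (congrFun (congrArg PreStab.P h12) φ) F
    have hZ : σ₁.1.Z = σ₂.1.Z := by
      funext E
      have e1 : σ₁.1.Z (plow.obj (pstar.obj E)) = (Fintype.card G : ℂ) * σ₁.1.Z E := by
        rw [Z_iso σ₁.1.Z σ₁.2.1.zadd (ppIso E), Z_card σ₁.1.Z σ₁.2.1.zadd G E]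
      have e2 : σ₂.1.Z (plow.obj (pstar.obj E)) = (Fintype.card G : ℂ) * σ₂.1.Z E := by
        rw [Z_iso σ₂.1.Z σ₂.2.1.zadd (ppIso E), Z_card σ₂.1.Z σ₂.2.1.zadd G E]
      have := hZeq (pstar.obj E)
      rw [e1, e2] at this
      exact mul_left_cancel₀ hcardC this
    have hP : σ₁.1.P = σ₂.1.P := by
      funext φ
      ext E
      exact ⟨hmem σ₁ σ₂ (fun φ F => (hPeq φ F).mp) φ E,
        hmem σ₂ σ₁ (fun φ F => (hPeq φ F).mpr) φ E⟩
    exact Subtype.ext (hext _ _ hZ hP)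
  · -- surjectivity of the pushforward
    intro σ'
    set c : ℝ := ((Fintype.card G : ℝ))⁻¹ with hc
    set τ : PreStab C₁ := ⟨fun E => (c : ℂ) * σ'.1.Z E, σ'.1.P⟩ with hτdef
    have hτ : IsStabilityCondition τ := by
      obtain ⟨⟨hsl, hzadd, hsc1, hsc2, hsc3, hsc4⟩, hlf⟩ := σ'.2
      refine ⟨⟨hsl, ?_, ?_, hsc2, hsc3, hsc4⟩, hlf⟩
      · intro T hT
        show (c : ℂ) * σ'.1.Z T.obj₂ = (c : ℂ) * σ'.1.Z T.obj₁ + (c : ℂ) * σ'.1.Z T.obj₃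
        rw [hzadd T hT]; ring
      · intro φ E hEP hEz
        obtain ⟨m, hm, hmz⟩ := hsc1 φ E hEP hEz
        refine ⟨c * m, by positivity, ?_⟩
        show (c : ℂ) * σ'.1.Z E = _
        rw [hmz]; push_cast; ring
    have hτc : (c : ℂ) * (Fintype.card G : ℂ) = 1 := by
      rw [hc]; push_cast; field_simp
    have hpush : pushforward pstar (pushforward plow τ) = σ'.1 := by
      refine hext _ _ ?_ ?_
      · funext E
        show (c : ℂ) * σ'.1.Z (plow.obj (pstar.obj E)) = σ'.1.Z E
        rw [Z_iso σ'.1.Z σ'.2.1.zadd (ppIso E), Z_card σ'.1.Z σ'.2.1.zadd G E,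
          ← mul_assoc, hτc, one_mul]
      · funext φ
        ext E
        show plow.obj (pstar.obj E) ∈ σ'.1.P φ ↔ E ∈ σ'.1.P φ
        constructor
        · intro hx
          by_cases hz : IsZero E
          · exact σ'.2.1.slicing.zero_mem φ E hz
          · exact mem_of_retract σ'.2.1 hz (biproduct.ι (fun _ : G => E) 1)
              (biproduct.π (fun _ : G => E) 1) (by simp)
              (σ'.2.1.slicing.iso_mem φ _ _ ⟨ppIso E⟩ hx)
        · intro hx
          exact σ'.2.1.slicing.iso_mem φ _ _ ⟨(ppIso E).symm⟩
            (mem_biproduct σ'.2.1.slicing hx G)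
    refine ⟨⟨pushforward plow τ, hpb ⟨τ, hτ⟩⟩, ?_, hpush⟩
    rw [show (⟨pushforward plow τ, hpb ⟨τ, hτ⟩⟩ : Stab C₂).1 = pushforward plow τ from rfl,
      hpush]
    exact σ'.2

end StabilityPaper
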